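/- For every word A ∈ W_ω there exists a unique word B in normal form NF such that A ∼ B, and moreover |B| ≤ |A|. -/

import Mathlib

open scoped Classical

/-- Words: finite strings over the alphabet of natural numbers. -/
abbrev Word := List ℕ

/-- Lexicographic "not greater" comparison of finite sequences of words,
where entries are compared with the preorder `r`. -/
def LexLe (r : Word → Word → Prop) (xs ys : List Word) : Prop :=
  (xs.length ≤ ys.length ∧ ∀ i < xs.length,
      r (xs.getD i []) (ys.getD i []) ∧ r (ys.getD i []) (xs.getD i []))
  ∨ ∃ s, s < xs.length ∧ s < ys.length ∧
      (∀ i < s, r (xs.getD i []) (ys.getD i []) ∧ r (ys.getD i []) (xs.getD i [])) ∧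
      r (xs.getD s []) (ys.getD s []) ∧ ¬ r (ys.getD s []) (xs.getD s [])

/-- `M` is a lexicographically maximal subsequence of `xs` (w.r.t. entry preorder `r`). -/
def IsLexMax (r : Word → Word → Prop) (xs M : List Word) : Prop :=
  M.Sublist xs ∧ ∀ N : List Word, N.Sublist xs → LexLe r N M

/-- Fuelled version of the recursively defined preorder `≾` on words:
`Λ ≾ Λ`; and if `n` is the minimal symbol of `A ++ B`, split `A` and `B` into
blocks at `n` and compare the lexicographically maximal subsequences of blocks. -/
def leAux : ℕ → Word → Word → Prop
  | 0, A, B => A = [] ∧ B = []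
  | (fuel+1), A, B =>
      (A = [] ∧ B = []) ∨
      (∀ m, (A ++ B).min? = some m →
        ∀ MA MB : List Word, IsLexMax (leAux fuel) (A.splitOn m) MA →
          IsLexMax (leAux fuel) (B.splitOn m) MB →
          LexLe (leAux fuel) MA MB)

/-- The preorder `≾` on words (the fuel `|A|+|B|+1` suffices for the recursion). -/
def Wle (A B : Word) : Prop := leAux (A.length + B.length + 1) A B

/-- The equivalence `∼`: `A ≾ B` and `B ≾ A`. -/
def Wequiv (A B : Word) : Prop := Wle A B ∧ Wle B A

/-- The strict relation `≺`: `A ≾ B` and not `B ≾ A`. -/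
def Wlt (A B : Word) : Prop := Wle A B ∧ ¬ Wle B A

/-- Fuelled version of the normal form predicate `NF`. -/
def NFAux : ℕ → Word → Prop
  | 0, A => A = []
  | (fuel+1), A => A = [] ∨ ∀ m, A.min? = some m →
      (A.splitOn m).Chain' (fun x y => Wle y x) ∧ ∀ b ∈ A.splitOn m, NFAux fuel b

/-- `A` is in normal form. -/
def InNF (A : Word) : Prop := NFAux A.length A

/-- `◇ₖ A`: the normal form of the word `A` with symbol `k` appended. -/
noncomputable def diamond (k : ℕ) (A : Word) : Word :=
  if h : ∃ B, InNF B ∧ Wequiv B (A ++ [k]) then h.choose else []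

/-- Fuelled version of the ordinal value functions `o_n` on normal-form words in `S_n`. -/
noncomputable def oAux : ℕ → ℕ → Word → Ordinal
  | 0, _, _ => 0
  | (fuel+1), n, A =>
      if A.all (· = n) then (A.length : Ordinal)
      else ((A.splitOn n).map (fun b => Ordinal.omega0 ^ oAux fuel (n+1) b)).foldr (· + ·) 0

/-- The ordinal value function `o_n : NF ∩ S_n → Ordinals`. -/
noncomputable def oW (n : ℕ) (A : Word) : Ordinal :=
  oAux (A.foldr max 0 + A.length + 1) n A

/-- The towers of `ω`-exponentiations: `ω_0 = 1`, `ω_{n+1} = ω ^ ω_n`. -/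
noncomputable def omegaTower : ℕ → Ordinal
  | 0 => 1
  | (n+1) => Ordinal.omega0 ^ omegaTower n

/-- `ε₀`, the supremum of the `ω`-towers. -/
noncomputable def eps0 : Ordinal := ⨆ n : ℕ, omegaTower n

/-- The function `ψ` on ordinals: `ψ 0 = ω`, and for `α > 0` with Cantor normal form
`ω^{α_1}+⋯+ω^{α_n}` (non-increasing exponents), `ψ α = ω^{α_1}+⋯+ω^{α_{n-1}}+ω^{α_n+1}`. -/
noncomputable def psi (α : Ordinal) : Ordinal :=
  match (Ordinal.CNF Ordinal.omega0 α).getLast? with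
  | none => Ordinal.omega0
  | some p =>
      ((Ordinal.CNF Ordinal.omega0 α).dropLast).foldr
        (fun q r => Ordinal.omega0 ^ q.1 * q.2 + r) 0
      + (Ordinal.omega0 ^ p.1 * (p.2 - 1) + Ordinal.omega0 ^ (p.1 + 1))

/-- The standard fundamental sequences `α[n]` for limit ordinals below `ε₀`
(junk values elsewhere). -/
noncomputable def fundSeq (α : Ordinal) (n : ℕ) : Ordinal :=
  match (Ordinal.CNF Ordinal.omega0 α).getLast? with
  | none => 0
  | some p =>
    let pre := ((Ordinal.CNF Ordinal.omega0 α).dropLast).foldr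
        (fun q r => Ordinal.omega0 ^ q.1 * q.2 + r) 0
      + Ordinal.omega0 ^ p.1 * (p.2 - 1)
    if p.1 = 0 then 0
    else if h : ∃ e', p.1 = e' + 1 then
      pre + Ordinal.omega0 ^ h.choose * ((n : Ordinal) + 1)
    else if hlt : p.1 < α then pre + Ordinal.omega0 ^ (fundSeq p.1 n) else 0
termination_by α
decreasing_by exact hlt

/-- The relation `R`: `α R β` iff `β = α + 1`, or `β` is a limit and `α = β[n]` for some `n`. -/
def Rrel (α β : Ordinal) : Prop :=
  β = α + 1 ∨ (Order.IsSuccLimit β ∧ ∃ n : ℕ, α = fundSeq β n)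
section Lex
variable {r r' : Word → Word → Prop} {S : Set Word} {xs ys zs M N : List Word}

lemma getD_mem_cons (xs : List Word) (i : ℕ) : xs.getD i [] ∈ [] :: xs := by
  rcases lt_or_ge i xs.length with h | h
  · exact List.mem_cons_of_mem _ (by rw [List.getD_eq_getElem _ _ h]; exact List.getElem_mem h)
  · rw [List.getD_eq_default _ _ h]; exact List.mem_cons_self

lemma getD_mem_S (hS : [] ∈ S) (hxs : ∀ x ∈ xs, x ∈ S) (i : ℕ) : xs.getD i [] ∈ S := by
  rcases lt_or_ge i xs.length with h | h
  · rw [List.getD_eq_getElem _ _ h]; exact hxs _ (List.getElem_mem h)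
  · rw [List.getD_eq_default _ _ h]; exact hS

lemma lexle_congr (hS : [] ∈ S) (hxs : ∀ x ∈ xs, x ∈ S) (hys : ∀ y ∈ ys, y ∈ S)
    (h : ∀ x ∈ S, ∀ y ∈ S, (r x y ↔ r' x y)) :
    LexLe r xs ys ↔ LexLe r' xs ys := by
  have hx := getD_mem_S hS hxs
  have hy := getD_mem_S hS hys
  unfold LexLe
  constructor <;> rintro (⟨h1, h2⟩ | ⟨s, hs1, hs2, h3, h4, h5⟩)
  · exact Or.inl ⟨h1, fun i hi => ⟨(h _ (hx i) _ (hy i)).1 (h2 i hi).1,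
      (h _ (hy i) _ (hx i)).1 (h2 i hi).2⟩⟩
  · exact Or.inr ⟨s, hs1, hs2, fun i hi => ⟨(h _ (hx i) _ (hy i)).1 (h3 i hi).1,
      (h _ (hy i) _ (hx i)).1 (h3 i hi).2⟩, (h _ (hx s) _ (hy s)).1 h4,
      fun hc => h5 ((h _ (hy s) _ (hx s)).2 hc)⟩
  · exact Or.inl ⟨h1, fun i hi => ⟨(h _ (hx i) _ (hy i)).2 (h2 i hi).1,
      (h _ (hy i) _ (hx i)).2 (h2 i hi).2⟩⟩
  · exact Or.inr ⟨s, hs1, hs2, fun i hi => ⟨(h _ (hx i) _ (hy i)).2 (h3 i hi).1,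
      (h _ (hy i) _ (hx i)).2 (h3 i hi).2⟩, (h _ (hx s) _ (hy s)).2 h4,
      fun hc => h5 ((h _ (hy s) _ (hx s)).1 hc)⟩

lemma islexmax_congr (hS : [] ∈ S) (hxs : ∀ x ∈ xs, x ∈ S)
    (h : ∀ x ∈ S, ∀ y ∈ S, (r x y ↔ r' x y)) :
    IsLexMax r xs M ↔ IsLexMax r' xs M := by
  unfold IsLexMax
  constructor <;> rintro ⟨h1, h2⟩ <;> refine ⟨h1, fun N hN => ?_⟩
  · exact (lexle_congr hS (fun x hx => hxs x (hN.subset hx)) (fun x hx => hxs x (h1.subset hx)) h).1 (h2 N hN)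
  · exact (lexle_congr hS (fun x hx => hxs x (hN.subset hx)) (fun x hx => hxs x (h1.subset hx)) h).2 (h2 N hN)

lemma lexle_of_equiv (h1 : xs.length ≤ ys.length)
    (h2 : ∀ i < xs.length, r (xs.getD i []) (ys.getD i []) ∧ r (ys.getD i []) (xs.getD i [])) :
    LexLe r xs ys := Or.inl ⟨h1, h2⟩

lemma lexle_both (h1 : LexLe r xs ys) (h2 : LexLe r ys xs) :
    xs.length = ys.length ∧ ∀ i < xs.length,
      r (xs.getD i []) (ys.getD i []) ∧ r (ys.getD i []) (xs.getD i []) := by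
  rcases h1 with ⟨l1, e1⟩ | ⟨s, hs1, hs2, hb, hr, hnr⟩
  · rcases h2 with ⟨l2, e2⟩ | ⟨s, hs1, hs2, hb, hr, hnr⟩
    · exact ⟨le_antisymm l1 l2, e1⟩
    · exact absurd (e1 s hs2).1 hnr
  · rcases h2 with ⟨l2, e2⟩ | ⟨t, ht1, ht2, hb', hr', hnr'⟩
    · exact absurd (e2 s hs2).1 hnr
    · rcases lt_trichotomy s t with h | h | h
      · exact absurd (hb' s h).1 hnr
      · exact absurd (h ▸ hr') hnr
      · exact absurd (hb t h).1 hnr'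

lemma lexle_total (hS : [] ∈ S) (hxs : ∀ x ∈ xs, x ∈ S) (hys : ∀ y ∈ ys, y ∈ S)
    (htot : ∀ x ∈ S, ∀ y ∈ S, r x y ∨ r y x) :
    LexLe r xs ys ∨ LexLe r ys xs := by
  have hx := getD_mem_S hS hxs
  have hy := getD_mem_S hS hys
  by_cases hall : ∀ i < min xs.length ys.length,
      r (xs.getD i []) (ys.getD i []) ∧ r (ys.getD i []) (xs.getD i [])
  · rcases le_total xs.length ys.length with h | h
    · exact Or.inl (lexle_of_equiv h (fun i hi => hall i (by omega)))
    · exact Or.inr (lexle_of_equiv h (fun i hi => ⟨(hall i (by omega)).2, (hall i (by omega)).1⟩))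
  · push_neg at hall
    obtain ⟨i, hi, hne⟩ := hall
    have hex : ∃ i, i < min xs.length ys.length ∧
        ¬ (r (xs.getD i []) (ys.getD i []) ∧ r (ys.getD i []) (xs.getD i [])) :=
      ⟨i, hi, fun hc => hne hc.1 hc.2⟩
    obtain ⟨hs, hsne⟩ := Nat.find_spec hex
    set s := Nat.find hex with hsdef
    have hmin : ∀ j < s, ¬ (j < min xs.length ys.length ∧
        ¬ (r (xs.getD j []) (ys.getD j []) ∧ r (ys.getD j []) (xs.getD j []))) :=
      fun j hj => Nat.find_min hex hj
    have hbelow : ∀ j < s, r (xs.getD j []) (ys.getD j []) ∧ r (ys.getD j []) (xs.getD j []) := by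
      intro j hj
      by_contra hc
      exact (hmin j hj) ⟨by omega, hc⟩
    rcases htot _ (hx s) _ (hy s) with h | h
    · have : ¬ r (ys.getD s []) (xs.getD s []) := fun hc => hsne ⟨h, hc⟩
      exact Or.inl (Or.inr ⟨s, by omega, by omega, hbelow, h, this⟩)
    · have : ¬ r (xs.getD s []) (ys.getD s []) := fun hc => hsne ⟨hc, h⟩
      exact Or.inr (Or.inr ⟨s, by omega, by omega,
        fun j hj => ⟨(hbelow j hj).2, (hbelow j hj).1⟩, h, this⟩)

lemma lexle_trans (hS : [] ∈ S) (hxs : ∀ x ∈ xs, x ∈ S) (hys : ∀ y ∈ ys, y ∈ S)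
    (hzs : ∀ z ∈ zs, z ∈ S)
    (htr : ∀ x ∈ S, ∀ y ∈ S, ∀ z ∈ S, r x y → r y z → r x z)
    (h1 : LexLe r xs ys) (h2 : LexLe r ys zs) : LexLe r xs zs := by
  have hx := getD_mem_S hS hxs
  have hy := getD_mem_S hS hys
  have hz := getD_mem_S hS hzs
  have tr : ∀ i, r (xs.getD i []) (ys.getD i []) → r (ys.getD i []) (zs.getD i []) →
      r (xs.getD i []) (zs.getD i []) := fun i => htr _ (hx i) _ (hy i) _ (hz i)
  have tr' : ∀ i, r (zs.getD i []) (ys.getD i []) → r (ys.getD i []) (xs.getD i []) →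
      r (zs.getD i []) (xs.getD i []) := fun i => htr _ (hz i) _ (hy i) _ (hx i)
  rcases h1 with ⟨l1, e1⟩ | ⟨s, hs1, hs2, hb, hr, hnr⟩
  · rcases h2 with ⟨l2, e2⟩ | ⟨t, ht1, ht2, hb', hr', hnr'⟩
    · exact Or.inl ⟨le_trans l1 l2, fun i hi =>
        ⟨tr i (e1 i hi).1 (e2 i (by omega)).1, tr' i (e2 i (by omega)).2 (e1 i hi).2⟩⟩
    · rcases lt_or_ge t xs.length with h | h
      · refine Or.inr ⟨t, h, ht2, fun i hi =>
          ⟨tr i (e1 i (by omega)).1 (hb' i hi).1, tr' i (hb' i hi).2 (e1 i (by omega)).2⟩,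
          tr t (e1 t h).1 hr', fun hc => hnr' (htr _ (hz t) _ (hx t) _ (hy t) hc (e1 t h).1)⟩
      · exact Or.inl ⟨by omega, fun i hi =>
          ⟨tr i (e1 i hi).1 (hb' i (by omega)).1, tr' i (hb' i (by omega)).2 (e1 i hi).2⟩⟩
  · rcases h2 with ⟨l2, e2⟩ | ⟨t, ht1, ht2, hb', hr', hnr'⟩
    · refine Or.inr ⟨s, hs1, by omega, fun i hi =>
        ⟨tr i (hb i hi).1 (e2 i (by omega)).1, tr' i (e2 i (by omega)).2 (hb i hi).2⟩,
        tr s hr (e2 s hs2).1, fun hc => hnr (htr _ (hy s) _ (hz s) _ (hx s) (e2 s hs2).1 hc)⟩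
    · rcases lt_trichotomy s t with h | h | h
      · refine Or.inr ⟨s, hs1, by omega, fun i hi =>
          ⟨tr i (hb i hi).1 (hb' i (by omega)).1, tr' i (hb' i (by omega)).2 (hb i hi).2⟩,
          tr s hr (hb' s h).1, fun hc => hnr (htr _ (hy s) _ (hz s) _ (hx s) (hb' s h).1 hc)⟩
      · subst h
        refine Or.inr ⟨s, hs1, ht2, fun i hi =>
          ⟨tr i (hb i hi).1 (hb' i hi).1, tr' i (hb' i hi).2 (hb i hi).2⟩,
          tr s hr hr', fun hc => hnr' (htr _ (hz s) _ (hx s) _ (hy s) hc hr)⟩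
      · refine Or.inr ⟨t, by omega, ht2, fun i hi =>
          ⟨tr i (hb i (by omega)).1 (hb' i hi).1, tr' i (hb' i hi).2 (hb i (by omega)).2⟩,
          tr t (hb t h).1 hr', fun hc => hnr' (htr _ (hz t) _ (hx t) _ (hy t) hc (hb t h).1)⟩

lemma exists_rel_max {α : Type*} (rel : α → α → Prop) (l : List α) (hne : l ≠ [])
    (htot : ∀ x ∈ l, ∀ y ∈ l, rel x y ∨ rel y x)
    (htr : ∀ x ∈ l, ∀ y ∈ l, ∀ z ∈ l, rel x y → rel y z → rel x z) :
    ∃ m ∈ l, ∀ x ∈ l, rel x m := by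
  induction l with
  | nil => exact absurd rfl hne
  | cons a t ih =>
    rcases eq_or_ne t [] with rfl | hte
    · refine ⟨a, List.mem_cons_self, fun x hx => ?_⟩
      rcases List.mem_singleton.1 hx with rfl
      rcases htot x (List.mem_cons_self) x (List.mem_cons_self) with h | h <;> exact h
    · obtain ⟨m, hm, hmax⟩ := ih hte
        (fun x hx y hy => htot x (List.mem_cons_of_mem _ hx) y (List.mem_cons_of_mem _ hy))
        (fun x hx y hy z hz => htr x (List.mem_cons_of_mem _ hx) y (List.mem_cons_of_mem _ hy)
          z (List.mem_cons_of_mem _ hz))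
      rcases htot a (List.mem_cons_self) m (List.mem_cons_of_mem _ hm) with h | h
      · refine ⟨m, List.mem_cons_of_mem _ hm, fun x hx => ?_⟩
        rcases List.mem_cons.1 hx with rfl | hx
        · exact h
        · exact hmax x hx
      · refine ⟨a, List.mem_cons_self, fun x hx => ?_⟩
        rcases List.mem_cons.1 hx with rfl | hx
        · rcases htot x (List.mem_cons_self) x (List.mem_cons_self) with h' | h' <;> exact h'
        · exact htr x (List.mem_cons_of_mem _ hx) m (List.mem_cons_of_mem _ hm) a
            (List.mem_cons_self) (hmax x hx) h

lemma exists_islexmax (hS : [] ∈ S) (hxs : ∀ x ∈ xs, x ∈ S)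
    (htot : ∀ x ∈ S, ∀ y ∈ S, r x y ∨ r y x)
    (htr : ∀ x ∈ S, ∀ y ∈ S, ∀ z ∈ S, r x y → r y z → r x z) :
    ∃ M, IsLexMax r xs M := by
  have hsub : ∀ N ∈ xs.sublists, ∀ x ∈ N, x ∈ S := by
    intro N hN x hx
    exact hxs x ((List.mem_sublists.1 hN).subset hx)
  obtain ⟨M, hM, hmax⟩ := exists_rel_max (LexLe r) xs.sublists
    (List.ne_nil_of_mem (List.mem_sublists.2 (List.nil_sublist xs)))
    (fun x hx y hy => lexle_total hS (hsub x hx) (hsub y hy) htot)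
    (fun x hx y hy z hz => lexle_trans hS (hsub x hx) (hsub y hy) (hsub z hz) htr)
  exact ⟨M, List.mem_sublists.1 hM, fun N hN => hmax N (List.mem_sublists.2 hN)⟩

/-- the entries of a lexmax are nonincreasing -/
lemma islexmax_chain (hS : [] ∈ S) (hxs : ∀ x ∈ xs, x ∈ S)
    (hrefl : ∀ x ∈ S, r x x)
    (htot : ∀ x ∈ S, ∀ y ∈ S, r x y ∨ r y x)
    (hM : IsLexMax r xs M) : M.Chain' (fun x y => r y x) := by
  apply List.isChain_iff_getElem.2
  intro i hi
  by_contra hc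
  -- decompose
  have hiM : i + 1 < M.length := by omega
  set a := M.get ⟨i, by omega⟩ with ha
  set b := M.get ⟨i+1, hiM⟩ with hb
  have hmemS : ∀ x ∈ M, x ∈ S := fun x hx => hxs x (hM.1.subset hx)
  have hrab : r a b := by
    rcases htot a (hmemS a (ha ▸ M.get_mem _)) b (hmemS b (hb ▸ M.get_mem _)) with h | h
    · exact h
    · exact absurd h hc
  -- N := M with entry i removed
  set N := M.take i ++ M.drop (i+1) with hN
  have hNsubM : N.Sublist M := by
    conv_rhs => rw [← List.take_append_drop i M]
    exact List.Sublist.append (List.Sublist.refl _)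
      (by rw [← List.drop_drop]; exact List.drop_sublist _ _)
  have hNsub : N.Sublist xs := hNsubM.trans hM.1
  have hle : LexLe r N M := hM.2 N hNsub
  have hNlen : N.length = M.length - 1 := by simp [hN]; omega
  have hNget : ∀ j, N.getD j [] = if j < i then M.getD j [] else M.getD (j+1) [] := by
    intro j
    have hlt : (M.take i).length = i := List.length_take_of_le (by omega)
    split
    · rename_i h
      rw [List.getD_append _ _ _ _ (by omega), List.getD_eq_getElem?_getD, List.getElem?_take,
        if_pos h, List.getD_eq_getElem?_getD]
    · rename_i h
      rw [List.getD_append_right _ _ _ _ (by rw [hlt]; omega), List.getD_eq_getElem?_getD,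
        List.getElem?_drop, List.getD_eq_getElem?_getD, hlt]
      congr 2
      omega
  rcases hle with ⟨l1, e1⟩ | ⟨s, hs1, hs2, hbel, hr, hnr⟩
  · have := (e1 i (by omega)).1
    rw [hNget i, if_neg (lt_irrefl i)] at this
    rw [List.getD_eq_getElem _ _ hiM, List.getD_eq_getElem _ _ (by omega : i < M.length)] at this
    exact hc (by simpa [ha, hb] using this)
  · rcases lt_trichotomy s i with h | h | h
    · have := hnr
      rw [hNget s, if_pos h] at this
      exact this (hrefl _ (getD_mem_S hS (fun x hx => hxs x (hM.1.subset hx)) s))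
    · subst h
      have := hnr
      rw [hNget s, if_neg (by omega)] at this
      rw [List.getD_eq_getElem _ _ (by omega : s < M.length),
        List.getD_eq_getElem _ _ (by omega : s + 1 < M.length)] at this
      exact this (by simpa [ha, hb] using hrab)
    · have := (hbel i h).1
      rw [hNget i, if_neg (by omega)] at this
      rw [List.getD_eq_getElem _ _ (by omega : i < M.length),
        List.getD_eq_getElem _ _ (by omega : i + 1 < M.length)] at this
      exact hc (by simpa [ha, hb] using this)

lemma lexle_cons_cons {a : Word} (ha : r a a) (h : LexLe r xs ys) :
    LexLe r (a :: xs) (a :: ys) := by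
  rcases h with ⟨l1, e1⟩ | ⟨s, hs1, hs2, hb, hr, hnr⟩
  · refine Or.inl ⟨by simpa using l1, fun i hi => ?_⟩
    match i with
    | 0 => exact ⟨ha, ha⟩
    | (j+1) => simpa using e1 j (by simpa using hi)
  · refine Or.inr ⟨s+1, by simpa using hs1, by simpa using hs2, fun i hi => ?_, by simpa using hr,
      by simpa using hnr⟩
    match i with
    | 0 => exact ⟨ha, ha⟩
    | (j+1) => simpa using hb j (by omega)

lemma lexle_cons_self {a : Word} (hS : [] ∈ S) (hmem : ∀ x ∈ a :: M, x ∈ S)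
    (hch : (a :: M).Chain' (fun x y => r y x)) : LexLe r M (a :: M) := by
  have hget := List.isChain_iff_getElem.1 hch
  have hle : ∀ i < M.length, r (M.getD i []) ((a :: M).getD i []) := by
    intro i hi
    have h := hget i (by simpa using hi)
    have e1 : (a :: M).get ⟨i+1, by simpa using hi⟩ = M.getD i [] := by
      rw [List.getD_eq_getElem _ _ hi]
      simp
    have e2 : (a :: M).get ⟨i, by simp; omega⟩ = (a :: M).getD i [] := by
      rw [List.getD_eq_getElem _ _ (by simp; omega)]
      simp
    simp only [List.get_eq_getElem] at e1 e2
    rwa [e1, e2] at h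
  by_cases hall : ∀ i < M.length,
      r (M.getD i []) ((a :: M).getD i []) ∧ r ((a :: M).getD i []) (M.getD i [])
  · exact Or.inl ⟨by simp, hall⟩
  · push_neg at hall
    obtain ⟨i, hi, hne⟩ := hall
    have hex : ∃ i, i < M.length ∧
        ¬ (r (M.getD i []) ((a :: M).getD i []) ∧ r ((a :: M).getD i []) (M.getD i [])) :=
      ⟨i, hi, fun hc => hne hc.1 hc.2⟩
    obtain ⟨hs, hsne⟩ := Nat.find_spec hex
    set s := Nat.find hex with hsdef
    refine Or.inr ⟨s, hs, by simp; omega, fun j hj => ?_, hle s hs,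
      fun hc => hsne ⟨hle s hs, hc⟩⟩
    by_contra hc
    exact Nat.find_min hex hj ⟨by omega, hc⟩

lemma lexle_sublist_of_chain (hS : [] ∈ S) (hmem : ∀ x ∈ M, x ∈ S)
    (hrefl : ∀ x ∈ S, r x x)
    (htr : ∀ x ∈ S, ∀ y ∈ S, ∀ z ∈ S, r x y → r y z → r x z)
    (hch : M.Chain' (fun x y => r y x)) (hsub : N.Sublist M) : LexLe r N M := by
  induction hsub with
  | slnil => exact Or.inl ⟨by simp, by simp⟩
  | @cons N M' a h ih =>
    have hmem' : ∀ x ∈ M', x ∈ S := fun x hx => hmem x (List.mem_cons_of_mem _ hx)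
    exact lexle_trans hS (fun x hx => hmem' x (h.subset hx)) hmem' hmem htr
      (ih hmem' hch.tail) (lexle_cons_self hS hmem hch)
  | @cons_cons N M' a h ih =>
    exact lexle_cons_cons (hrefl a (hmem a (List.mem_cons_self)))
      (ih (fun x hx => hmem x (List.mem_cons_of_mem _ hx)) hch.tail)

end Lex

lemma leAux_succ (f : ℕ) (A B : Word) : leAux (f+1) A B =
    ((A = [] ∧ B = []) ∨
      (∀ m, (A ++ B).min? = some m →
        ∀ MA MB : List Word, IsLexMax (leAux f) (A.splitOn m) MA →
          IsLexMax (leAux f) (B.splitOn m) MB →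
          LexLe (leAux f) MA MB)) := rfl

section SplitOn

lemma splitOn_cons (y m : ℕ) (ys : List ℕ) :
    (y :: ys).splitOn m =
      if y = m then [] :: ys.splitOn m else (ys.splitOn m).modifyHead (y :: ·) := by
  by_cases h : y = m <;> simp [List.splitOn, List.splitOnP_cons, h]

lemma mem_of_mem_splitOn {A b : List ℕ} {m x : ℕ} (hb : b ∈ A.splitOn m) (hx : x ∈ b) :
    x ∈ A ∧ x ≠ m := by
  induction A generalizing b with
  | nil => simp [List.splitOn] at hb; subst hb; simp at hx
  | cons y ys ih =>
    rw [splitOn_cons] at hb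
    split at hb
    · rcases List.mem_cons.1 hb with rfl | hb
      · simp at hx
      · have := ih hb hx
        exact ⟨List.mem_cons_of_mem _ this.1, this.2⟩
    · rename_i hy
      obtain ⟨c, cs, hc⟩ := List.exists_cons_of_ne_nil (List.splitOnP_ne_nil _ ys)
      rw [show ys.splitOn m = ys.splitOnP (· == m) from rfl, hc] at hb ih
      simp only [List.modifyHead] at hb
      rcases List.mem_cons.1 hb with rfl | hb
      · rcases List.mem_cons.1 hx with rfl | hx
        · exact ⟨List.mem_cons_self, hy⟩
        · have := ih (List.mem_cons_self) hx
          exact ⟨List.mem_cons_of_mem _ this.1, this.2⟩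
      · have := ih (List.mem_cons_of_mem _ hb) hx
        exact ⟨List.mem_cons_of_mem _ this.1, this.2⟩

lemma splitOn_length_sum (A : List ℕ) (m : ℕ) :
    ((A.splitOn m).map List.length).sum + (A.splitOn m).length = A.length + 1 := by
  induction A with
  | nil => simp [List.splitOn]
  | cons y ys ih =>
    rw [splitOn_cons]
    split
    · simp only [List.map_cons, List.sum_cons, List.length_cons, List.length]
      omega
    · obtain ⟨c, cs, hc⟩ := List.exists_cons_of_ne_nil (List.splitOnP_ne_nil (· == m) ys)
      rw [show ys.splitOn m = ys.splitOnP (· == m) from rfl] at ih ⊢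
      rw [hc] at ih ⊢
      simp only [List.modifyHead, List.map_cons, List.sum_cons, List.length_cons] at ih ⊢
      omega

lemma two_le_splitOn_length {A : List ℕ} {m : ℕ} (hm : m ∈ A) :
    2 ≤ (A.splitOn m).length := by
  induction A with
  | nil => simp at hm
  | cons y ys ih =>
    rw [splitOn_cons]
    split
    · have := List.splitOnP_ne_nil (· == m) ys
      have : 1 ≤ (ys.splitOn m).length := List.length_pos_iff.2 this
      simp only [List.length_cons]
      omega
    · rename_i hy
      rcases List.mem_cons.1 hm with rfl | hm'
      · exact absurd rfl hy
      · have := ih hm'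
        obtain ⟨c, cs, hc⟩ := List.exists_cons_of_ne_nil (List.splitOnP_ne_nil (· == m) ys)
        rw [show ys.splitOn m = ys.splitOnP (· == m) from rfl] at this ⊢
        rw [hc] at this ⊢
        simpa using this

lemma splitOn_of_not_mem {A : List ℕ} {m : ℕ} (hm : m ∉ A) : A.splitOn m = [A] :=
  List.splitOnP_eq_single (p := (· == m)) (by
    intro x hx
    simp only [beq_eq_false_iff_ne]
    exact fun h => hm (h ▸ hx))

lemma splitOn_ne_nil (A : List ℕ) (m : ℕ) : A.splitOn m ≠ [] := List.splitOnP_ne_nil _ _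

lemma min?_eq_some_iff_nat {l : List ℕ} {m : ℕ} :
    l.min? = some m ↔ m ∈ l ∧ ∀ b ∈ l, m ≤ b :=
  List.min?_eq_some_iff

end SplitOn

lemma leAux_stable : ∀ k f g (A B : Word), (A ++ B).toFinset.card ≤ k → k < f → k < g →
    (leAux f A B ↔ leAux g A B) := by
  intro k
  induction k with
  | zero =>
    intro f g A B hcard hf hg
    have hAB : A ++ B = [] := by
      have : (A ++ B).toFinset = ∅ := Finset.card_eq_zero.1 (le_antisymm hcard (Nat.zero_le _))
      rw [← List.toFinset_eq_empty_iff]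
      exact this
    obtain ⟨rfl, rfl⟩ := List.append_eq_nil_iff.1 hAB
    obtain ⟨f', rfl⟩ : ∃ f', f = f'+1 := ⟨f-1, by omega⟩
    obtain ⟨g', rfl⟩ : ∃ g', g = g'+1 := ⟨g-1, by omega⟩
    rw [leAux_succ, leAux_succ]
    constructor <;> intro _ <;> exact Or.inl ⟨rfl, rfl⟩
  | succ k ih =>
    intro f g A B hcard hf hg
    obtain ⟨f', rfl⟩ : ∃ f', f = f'+1 := ⟨f-1, by omega⟩
    obtain ⟨g', rfl⟩ : ∃ g', g = g'+1 := ⟨g-1, by omega⟩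
    rw [leAux_succ, leAux_succ]
    apply or_congr Iff.rfl
    apply forall_congr'
    intro m
    apply imp_congr_right
    intro hm
    obtain ⟨hmem_m, hle_m⟩ := min?_eq_some_iff_nat.1 hm
    set S : Set Word := {w : Word | ∀ x ∈ w, x ∈ (A ++ B).toFinset.erase m} with hSdef
    have hS : [] ∈ S := by intro x hx; simp at hx
    have hSA : ∀ b ∈ A.splitOn m, b ∈ S := by
      intro b hb x hx
      obtain ⟨h1, h2⟩ := mem_of_mem_splitOn hb hx
      exact Finset.mem_erase.2 ⟨h2, List.mem_toFinset.2 (List.mem_append_left _ h1)⟩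
    have hSB : ∀ b ∈ B.splitOn m, b ∈ S := by
      intro b hb x hx
      obtain ⟨h1, h2⟩ := mem_of_mem_splitOn hb hx
      exact Finset.mem_erase.2 ⟨h2, List.mem_toFinset.2 (List.mem_append_right _ h1)⟩
    have hcongr : ∀ x ∈ S, ∀ y ∈ S, (leAux f' x y ↔ leAux g' x y) := by
      intro x hx y hy
      apply ih f' g' x y ?_ (by omega) (by omega)
      have hsub : (x ++ y).toFinset ⊆ (A ++ B).toFinset.erase m := by
        intro a ha
        rcases List.mem_append.1 (List.mem_toFinset.1 ha) with h | h
        · exact hx a h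
        · exact hy a h
      calc (x ++ y).toFinset.card ≤ ((A ++ B).toFinset.erase m).card := Finset.card_le_card hsub
        _ = (A ++ B).toFinset.card - 1 := Finset.card_erase_of_mem (List.mem_toFinset.2 hmem_m)
        _ ≤ k := by
            have : 1 ≤ (A ++ B).toFinset.card := Finset.card_pos.2 ⟨m, List.mem_toFinset.2 hmem_m⟩
            omega
    constructor
    · intro h MA MB hMA hMB
      have hMA' := (islexmax_congr hS hSA hcongr).2 hMA
      have hMB' := (islexmax_congr hS hSB hcongr).2 hMB
      exact (lexle_congr hS (fun x hx => hSA x (hMA.1.subset hx))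
        (fun x hx => hSB x (hMB.1.subset hx)) hcongr).1 (h MA MB hMA' hMB')
    · intro h MA MB hMA hMB
      have hMA' := (islexmax_congr hS hSA hcongr).1 hMA
      have hMB' := (islexmax_congr hS hSB hcongr).1 hMB
      exact (lexle_congr hS (fun x hx => hSA x (hMA.1.subset hx))
        (fun x hx => hSB x (hMB.1.subset hx)) hcongr).2 (h MA MB hMA' hMB')

lemma leAux_iff_wle {f : ℕ} {A B : Word} (hf : (A ++ B).toFinset.card < f) :
    leAux f A B ↔ Wle A B :=
  leAux_stable (A ++ B).toFinset.card f (A.length + B.length + 1) A B le_rfl hf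
    (by have := (A ++ B).toFinset_card_le; rw [List.length_append] at this; omega)

def Cmp (m : ℕ) (A B : Word) : Prop :=
  ∀ MA MB : List Word, IsLexMax Wle (A.splitOn m) MA → IsLexMax Wle (B.splitOn m) MB →
    LexLe Wle MA MB

lemma wle_refl (A : Word) : Wle A A := by
  unfold Wle
  rw [leAux_succ]
  exact Or.inr (fun m hm MA MB hMA hMB => hMB.2 MA hMA.1)

lemma wle_nil_nil : Wle [] [] := wle_refl []

lemma lexle_nil (ys : List Word) : LexLe Wle [] ys := Or.inl ⟨by simp, by simp⟩

lemma not_lexle_cons_nil (x : Word) (xs : List Word) : ¬ LexLe Wle (x :: xs) [] := by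
  rintro (⟨h1, _⟩ | ⟨s, _, hs2, _⟩)
  · simp at h1
  · simp at hs2

lemma islexmax_singleton {x : Word} {M : List Word} : IsLexMax Wle [x] M ↔ M = [x] := by
  constructor
  · rintro ⟨h1, h2⟩
    rcases List.sublist_singleton.1 h1 with rfl | rfl
    · exact absurd (h2 [x] (List.Sublist.refl _)) (not_lexle_cons_nil _ _)
    · rfl
  · rintro rfl
    refine ⟨List.Sublist.refl _, fun N hN => ?_⟩
    rcases List.sublist_singleton.1 hN with rfl | rfl
    · exact lexle_nil _
    · exact lexle_of_equiv le_rfl (fun i hi => by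
        have : i = 0 := by simpa using hi
        subst this
        exact ⟨wle_refl _, wle_refl _⟩)

lemma lexle_singleton {A B : Word} : LexLe Wle [A] [B] ↔ Wle A B := by
  constructor
  · rintro (⟨_, e⟩ | ⟨s, hs1, _, _, hr, _⟩)
    · exact (e 0 (by simp)).1
    · have : s = 0 := by simpa using hs1
      subst this
      exact hr
  · intro h
    by_cases h' : Wle B A
    · exact lexle_of_equiv le_rfl (fun i hi => by
        have : i = 0 := by simpa using hi
        subst this
        exact ⟨h, h'⟩)
    · exact Or.inr ⟨0, by simp, by simp, by simp, h, h'⟩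

lemma wle_unfold_cmp (A B : Word) :
    Wle A B ↔ ((A = [] ∧ B = []) ∨ ∀ m, (A ++ B).min? = some m → Cmp m A B) := by
  rw [Wle, leAux_succ]
  apply or_congr Iff.rfl
  apply forall_congr'
  intro m
  apply imp_congr_right
  intro hm
  obtain ⟨hmem_m, hle_m⟩ := min?_eq_some_iff_nat.1 hm
  set S : Set Word := {w : Word | ∀ x ∈ w, x ∈ (A ++ B).toFinset.erase m} with hSdef
  have hS : [] ∈ S := by intro x hx; simp at hx
  have hSA : ∀ b ∈ A.splitOn m, b ∈ S := by
    intro b hb x hx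
    obtain ⟨h1, h2⟩ := mem_of_mem_splitOn hb hx
    exact Finset.mem_erase.2 ⟨h2, List.mem_toFinset.2 (List.mem_append_left _ h1)⟩
  have hSB : ∀ b ∈ B.splitOn m, b ∈ S := by
    intro b hb x hx
    obtain ⟨h1, h2⟩ := mem_of_mem_splitOn hb hx
    exact Finset.mem_erase.2 ⟨h2, List.mem_toFinset.2 (List.mem_append_right _ h1)⟩
  have hcongr : ∀ x ∈ S, ∀ y ∈ S, (leAux (A.length + B.length) x y ↔ Wle x y) := by
    intro x hx y hy
    apply leAux_iff_wle
    have hsub : (x ++ y).toFinset ⊆ (A ++ B).toFinset.erase m := by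
      intro a ha
      rcases List.mem_append.1 (List.mem_toFinset.1 ha) with h | h
      · exact hx a h
      · exact hy a h
    have hcardAB : (A ++ B).toFinset.card ≤ A.length + B.length := by
      have := (A ++ B).toFinset_card_le
      rw [List.length_append] at this
      exact this
    calc (x ++ y).toFinset.card ≤ ((A ++ B).toFinset.erase m).card := Finset.card_le_card hsub
      _ = (A ++ B).toFinset.card - 1 := Finset.card_erase_of_mem (List.mem_toFinset.2 hmem_m)
      _ < A.length + B.length := by
          have h1 : 1 ≤ (A ++ B).toFinset.card := Finset.card_pos.2 ⟨m, List.mem_toFinset.2 hmem_m⟩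
          have h2 : 1 ≤ A.length + B.length := by
            have := List.length_pos_iff.2 (List.ne_nil_of_mem hmem_m)
            rw [List.length_append] at this
            omega
          omega
  constructor
  · intro h MA MB hMA hMB
    have hMA' := (islexmax_congr hS hSA hcongr).2 hMA
    have hMB' := (islexmax_congr hS hSB hcongr).2 hMB
    exact (lexle_congr hS (fun x hx => hSA x (hMA.1.subset hx))
      (fun x hx => hSB x (hMB.1.subset hx)) hcongr).1 (h MA MB hMA' hMB')
  · intro h MA MB hMA hMB
    have hMA' := (islexmax_congr hS hSA hcongr).1 hMA
    have hMB' := (islexmax_congr hS hSB hcongr).1 hMB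
    exact (lexle_congr hS (fun x hx => hSA x (hMA.1.subset hx))
      (fun x hx => hSB x (hMB.1.subset hx)) hcongr).2 (h MA MB hMA' hMB')

lemma wle_iff_cmp {A B : Word} {m : ℕ} (hm : ∀ a ∈ A ++ B, m ≤ a) :
    Wle A B ↔ Cmp m A B := by
  rcases eq_or_ne (A ++ B) [] with hAB | hAB
  · obtain ⟨rfl, rfl⟩ := List.append_eq_nil_iff.1 hAB
    constructor
    · intro _ MA MB hMA hMB
      rw [show ([] : Word).splitOn m = [[]] from rfl] at hMA hMB
      rw [islexmax_singleton.1 hMA, islexmax_singleton.1 hMB]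
      exact lexle_singleton.2 wle_nil_nil
    · intro _
      exact wle_nil_nil
  · by_cases hmem : m ∈ A ++ B
    · have hmin : (A ++ B).min? = some m := min?_eq_some_iff_nat.2 ⟨hmem, hm⟩
      rw [wle_unfold_cmp]
      constructor
      · rintro (⟨rfl, rfl⟩ | h)
        · simp at hAB
        · exact h m hmin
      · intro h
        refine Or.inr (fun m' hm' => ?_)
        rw [hm'] at hmin
        rw [Option.some_inj.1 hmin]
        exact h
    · have hA : m ∉ A := fun h => hmem (List.mem_append_left _ h)
      have hB : m ∉ B := fun h => hmem (List.mem_append_right _ h)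
      rw [Cmp, splitOn_of_not_mem hA, splitOn_of_not_mem hB]
      constructor
      · intro h MA MB hMA hMB
        rw [islexmax_singleton.1 hMA, islexmax_singleton.1 hMB]
        exact lexle_singleton.2 h
      · intro h
        exact lexle_singleton.1 (h [A] [B] (islexmax_singleton.2 rfl) (islexmax_singleton.2 rfl))

lemma card_erase_le {U : Word} {m : ℕ} {k : ℕ} (hU : U.toFinset.card ≤ k + 1) (hm : m ∈ U)
    {w : Word} (hw : ∀ a ∈ w, a ∈ U.toFinset.erase m) : w.toFinset.card ≤ k := by
  have hsub : w.toFinset ⊆ U.toFinset.erase m := fun a ha => hw a (List.mem_toFinset.1 ha)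
  calc w.toFinset.card ≤ (U.toFinset.erase m).card := Finset.card_le_card hsub
    _ = U.toFinset.card - 1 := Finset.card_erase_of_mem (List.mem_toFinset.2 hm)
    _ ≤ k := by
        have : 1 ≤ U.toFinset.card := Finset.card_pos.2 ⟨m, List.mem_toFinset.2 hm⟩
        omega

lemma min?_exists_of_ne_nil {C : Word} (h : C ≠ []) : ∃ m, C.min? = some m := by
  cases hm : C.min? with
  | none => exact absurd (List.min?_eq_none_iff.1 hm) h
  | some m => exact ⟨m, rfl⟩

theorem wle_master : ∀ k : ℕ,
    (∀ C : Word, C.toFinset.card ≤ k → Wle [] C) ∧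
    (∀ A B : Word, (A ++ B).toFinset.card ≤ k → Wle A B ∨ Wle B A) ∧
    (∀ A B C : Word, (A ++ B ++ C).toFinset.card ≤ k → Wle A B → Wle B C → Wle A C) := by
  intro k
  induction k with
  | zero =>
    have hnil : ∀ (w : Word), w.toFinset.card ≤ 0 → w = [] := by
      intro w hw
      rw [← List.toFinset_eq_empty_iff]
      exact Finset.card_eq_zero.1 (le_antisymm hw (Nat.zero_le _))
    refine ⟨fun C hC => ?_, fun A B hAB => ?_, fun A B C hABC => ?_⟩
    · rw [hnil C hC]; exact wle_nil_nil
    · obtain ⟨rfl, rfl⟩ := List.append_eq_nil_iff.1 (hnil _ hAB)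
      exact Or.inl wle_nil_nil
    · obtain ⟨h, rfl⟩ := List.append_eq_nil_iff.1 (hnil _ hABC)
      obtain ⟨rfl, rfl⟩ := List.append_eq_nil_iff.1 h
      exact fun _ _ => wle_nil_nil
  | succ k ih =>
    obtain ⟨ihb, ihtot, ihtra⟩ := ih
    refine ⟨fun C hC => ?_, fun A B hAB => ?_, fun A B C hABC => ?_⟩
    -- Bot
    · rcases eq_or_ne C [] with rfl | hne
      · exact wle_nil_nil
      · obtain ⟨m, hmin⟩ := min?_exists_of_ne_nil hne
        obtain ⟨hmem, hle⟩ := min?_eq_some_iff_nat.1 hmin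
        rw [wle_iff_cmp (m := m) (by simpa using hle)]
        intro MA MB hMA hMB
        rw [show ([] : Word).splitOn m = [[]] from rfl] at hMA
        rw [islexmax_singleton.1 hMA]
        obtain ⟨c, cs, hc⟩ := List.exists_cons_of_ne_nil (splitOn_ne_nil C m)
        have hcsub : [c].Sublist (C.splitOn m) := by
          rw [hc]; exact (List.nil_sublist cs).cons₂ c
        have hMBne : MB ≠ [] := by
          rintro rfl
          exact not_lexle_cons_nil _ _ (hMB.2 [c] hcsub)
        obtain ⟨b, MB', rfl⟩ := List.exists_cons_of_ne_nil hMBne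
        have hbS : ∀ a ∈ b, a ∈ C.toFinset.erase m := by
          intro a ha
          obtain ⟨h1, h2⟩ := mem_of_mem_splitOn (hMB.1.subset (List.mem_cons_self)) ha
          exact Finset.mem_erase.2 ⟨h2, List.mem_toFinset.2 h1⟩
        have hb0 : Wle [] b := ihb b (card_erase_le hC hmem hbS)
        by_cases hble : Wle b []
        · exact lexle_of_equiv (by simp) (fun i hi => by
            have : i = 0 := by simpa using hi
            subst this
            exact ⟨hb0, hble⟩)
        · exact Or.inr ⟨0, by simp, by simp, by simp, hb0, hble⟩
    -- Tot
    · rcases eq_or_ne (A ++ B) [] with hABnil | hne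
      · obtain ⟨rfl, rfl⟩ := List.append_eq_nil_iff.1 hABnil
        exact Or.inl wle_nil_nil
      · obtain ⟨m, hmin⟩ := min?_exists_of_ne_nil hne
        obtain ⟨hmem, hle⟩ := min?_eq_some_iff_nat.1 hmin
        set S : Set Word := {w : Word | ∀ x ∈ w, x ∈ (A ++ B).toFinset.erase m} with hSdef
        have hS : [] ∈ S := by intro x hx; simp at hx
        have hSA : ∀ b ∈ A.splitOn m, b ∈ S := by
          intro b hb x hx
          obtain ⟨h1, h2⟩ := mem_of_mem_splitOn hb hx
          exact Finset.mem_erase.2 ⟨h2, List.mem_toFinset.2 (List.mem_append_left _ h1)⟩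
        have hSB : ∀ b ∈ B.splitOn m, b ∈ S := by
          intro b hb x hx
          obtain ⟨h1, h2⟩ := mem_of_mem_splitOn hb hx
          exact Finset.mem_erase.2 ⟨h2, List.mem_toFinset.2 (List.mem_append_right _ h1)⟩
        have htotS : ∀ x ∈ S, ∀ y ∈ S, Wle x y ∨ Wle y x := by
          intro x hx y hy
          apply ihtot x y
          apply card_erase_le hAB hmem
          intro a ha
          rcases List.mem_append.1 ha with h | h
          · exact hx a h
          · exact hy a h
        have htrS : ∀ x ∈ S, ∀ y ∈ S, ∀ z ∈ S, Wle x y → Wle y z → Wle x z := by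
          intro x hx y hy z hz
          apply ihtra x y z
          apply card_erase_le hAB hmem
          intro a ha
          rcases List.mem_append.1 ha with h | h
          · rcases List.mem_append.1 h with h' | h'
            · exact hx a h'
            · exact hy a h'
          · exact hz a h
        obtain ⟨MA0, hMA0⟩ := exists_islexmax hS hSA htotS htrS
        obtain ⟨MB0, hMB0⟩ := exists_islexmax hS hSB htotS htrS
        have hMA0S : ∀ x ∈ MA0, x ∈ S := fun x hx => hSA x (hMA0.1.subset hx)
        have hMB0S : ∀ x ∈ MB0, x ∈ S := fun x hx => hSB x (hMB0.1.subset hx)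
        have hmB : ∀ a ∈ B ++ A, m ≤ a := by
          intro a ha
          apply hle
          rcases List.mem_append.1 ha with h | h
          · exact List.mem_append_right _ h
          · exact List.mem_append_left _ h
        rcases lexle_total hS hMA0S hMB0S htotS with h | h
        · left
          rw [wle_iff_cmp (m := m) hle]
          intro MA MB hMA hMB
          have hMAS : ∀ x ∈ MA, x ∈ S := fun x hx => hSA x (hMA.1.subset hx)
          have hMBS : ∀ x ∈ MB, x ∈ S := fun x hx => hSB x (hMB.1.subset hx)
          exact lexle_trans hS hMAS hMB0S hMBS htrS
            (lexle_trans hS hMAS hMA0S hMB0S htrS (hMA0.2 MA hMA.1) h)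
            (hMB.2 MB0 hMB0.1)
        · right
          rw [wle_iff_cmp (m := m) hmB]
          intro MB MA hMB hMA
          have hMAS : ∀ x ∈ MA, x ∈ S := fun x hx => hSA x (hMA.1.subset hx)
          have hMBS : ∀ x ∈ MB, x ∈ S := fun x hx => hSB x (hMB.1.subset hx)
          exact lexle_trans hS hMBS hMA0S hMAS htrS
            (lexle_trans hS hMBS hMB0S hMA0S htrS (hMB0.2 MB hMB.1) h)
            (hMA.2 MA0 hMA0.1)
    -- Tra
    · rcases eq_or_ne (A ++ B ++ C) [] with hnil | hne
      · obtain ⟨h, rfl⟩ := List.append_eq_nil_iff.1 hnil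
        obtain ⟨rfl, rfl⟩ := List.append_eq_nil_iff.1 h
        exact fun _ _ => wle_nil_nil
      · obtain ⟨m, hmin⟩ := min?_exists_of_ne_nil hne
        obtain ⟨hmem, hle⟩ := min?_eq_some_iff_nat.1 hmin
        have hleA : ∀ a ∈ A, m ≤ a := fun a ha =>
          hle a (List.mem_append_left _ (List.mem_append_left _ ha))
        have hleB : ∀ a ∈ B, m ≤ a := fun a ha =>
          hle a (List.mem_append_left _ (List.mem_append_right _ ha))
        have hleC : ∀ a ∈ C, m ≤ a := fun a ha => hle a (List.mem_append_right _ ha)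
        intro h1 h2
        have hc1 : Cmp m A B := (wle_iff_cmp (m := m) (by
          intro a ha
          rcases List.mem_append.1 ha with h | h
          · exact hleA a h
          · exact hleB a h)).1 h1
        have hc2 : Cmp m B C := (wle_iff_cmp (m := m) (by
          intro a ha
          rcases List.mem_append.1 ha with h | h
          · exact hleB a h
          · exact hleC a h)).1 h2
        rw [wle_iff_cmp (m := m) (by
          intro a ha
          rcases List.mem_append.1 ha with h | h
          · exact hleA a h
          · exact hleC a h)]
        set S : Set Word := {w : Word | ∀ x ∈ w, x ∈ (A ++ B ++ C).toFinset.erase m} with hSdef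
        have hS : [] ∈ S := by intro x hx; simp at hx
        have hSA : ∀ b ∈ A.splitOn m, b ∈ S := by
          intro b hb x hx
          obtain ⟨hh1, hh2⟩ := mem_of_mem_splitOn hb hx
          exact Finset.mem_erase.2 ⟨hh2, List.mem_toFinset.2
            (List.mem_append_left _ (List.mem_append_left _ hh1))⟩
        have hSB : ∀ b ∈ B.splitOn m, b ∈ S := by
          intro b hb x hx
          obtain ⟨hh1, hh2⟩ := mem_of_mem_splitOn hb hx
          exact Finset.mem_erase.2 ⟨hh2, List.mem_toFinset.2
            (List.mem_append_left _ (List.mem_append_right _ hh1))⟩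
        have hSC : ∀ b ∈ C.splitOn m, b ∈ S := by
          intro b hb x hx
          obtain ⟨hh1, hh2⟩ := mem_of_mem_splitOn hb hx
          exact Finset.mem_erase.2 ⟨hh2, List.mem_toFinset.2 (List.mem_append_right _ hh1)⟩
        have htotS : ∀ x ∈ S, ∀ y ∈ S, Wle x y ∨ Wle y x := by
          intro x hx y hy
          apply ihtot x y
          apply card_erase_le hABC hmem
          intro a ha
          rcases List.mem_append.1 ha with h | h
          · exact hx a h
          · exact hy a h
        have htrS : ∀ x ∈ S, ∀ y ∈ S, ∀ z ∈ S, Wle x y → Wle y z → Wle x z := by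
          intro x hx y hy z hz
          apply ihtra x y z
          apply card_erase_le hABC hmem
          intro a ha
          rcases List.mem_append.1 ha with h | h
          · rcases List.mem_append.1 h with h' | h'
            · exact hx a h'
            · exact hy a h'
          · exact hz a h
        obtain ⟨MB0, hMB0⟩ := exists_islexmax hS hSB htotS htrS
        intro MA MC hMA hMC
        have hMAS : ∀ x ∈ MA, x ∈ S := fun x hx => hSA x (hMA.1.subset hx)
        have hMB0S : ∀ x ∈ MB0, x ∈ S := fun x hx => hSB x (hMB0.1.subset hx)
        have hMCS : ∀ x ∈ MC, x ∈ S := fun x hx => hSC x (hMC.1.subset hx)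
        exact lexle_trans hS hMAS hMB0S hMCS htrS (hc1 MA MB0 hMA hMB0) (hc2 MB0 MC hMB0 hMC)

theorem wle_nil_le (C : Word) : Wle [] C := (wle_master C.toFinset.card).1 C le_rfl

theorem wle_total (A B : Word) : Wle A B ∨ Wle B A :=
  (wle_master (A ++ B).toFinset.card).2.1 A B le_rfl

theorem wle_trans {A B C : Word} : Wle A B → Wle B C → Wle A C :=
  (wle_master (A ++ B ++ C).toFinset.card).2.2 A B C le_rfl

-- global (universe-S) versions
lemma lexle_total' (xs ys : List Word) : LexLe Wle xs ys ∨ LexLe Wle ys xs :=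
  lexle_total (S := Set.univ) trivial (fun _ _ => trivial) (fun _ _ => trivial)
    (fun x _ y _ => wle_total x y)

lemma lexle_trans' {xs ys zs : List Word} (h1 : LexLe Wle xs ys) (h2 : LexLe Wle ys zs) :
    LexLe Wle xs zs :=
  lexle_trans (S := Set.univ) trivial (fun _ _ => trivial) (fun _ _ => trivial)
    (fun _ _ => trivial) (fun x _ y _ z _ => wle_trans) h1 h2

lemma exists_islexmax' (xs : List Word) : ∃ M, IsLexMax Wle xs M :=
  exists_islexmax (S := Set.univ) trivial (fun _ _ => trivial)
    (fun x _ y _ => wle_total x y) (fun x _ y _ z _ => wle_trans)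

lemma islexmax_chain' {xs M : List Word} (hM : IsLexMax Wle xs M) :
    M.Chain' (fun x y => Wle y x) :=
  islexmax_chain (S := Set.univ) trivial (fun _ _ => trivial) (fun x _ => wle_refl x)
    (fun x _ y _ => wle_total x y) hM

lemma lexle_sublist_of_chain' {M N : List Word} (hch : M.Chain' (fun x y => Wle y x))
    (hsub : N.Sublist M) : LexLe Wle N M :=
  lexle_sublist_of_chain (S := Set.univ) trivial (fun _ _ => trivial) (fun x _ => wle_refl x)
    (fun x _ y _ z _ => wle_trans) hch hsub

lemma islexmax_self_of_chain {M : List Word} (hch : M.Chain' (fun x y => Wle y x)) :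
    IsLexMax Wle M M :=
  ⟨List.Sublist.refl _, fun N hN => lexle_sublist_of_chain' hch hN⟩

lemma islexmax_ne_nil {C : Word} {m : ℕ} {M : List Word} (hM : IsLexMax Wle (C.splitOn m) M) :
    M ≠ [] := by
  obtain ⟨c, cs, hc⟩ := List.exists_cons_of_ne_nil (splitOn_ne_nil C m)
  have hcsub : [c].Sublist (C.splitOn m) := by
    rw [hc]; exact (List.nil_sublist cs).cons₂ c
  rintro rfl
  exact not_lexle_cons_nil _ _ (hM.2 [c] hcsub)

lemma wle_not_le_nil {C : Word} (hC : C ≠ []) : ¬ Wle C [] := by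
  intro hle
  obtain ⟨m, hmin⟩ := min?_exists_of_ne_nil hC
  obtain ⟨hmem, hm⟩ := min?_eq_some_iff_nat.1 hmin
  have hcmp : Cmp m C [] := (wle_iff_cmp (m := m) (by simpa using hm)).1 hle
  obtain ⟨MA0, hMA0⟩ := exists_islexmax' (C.splitOn m)
  have hle1 : LexLe Wle MA0 [[]] := hcmp MA0 [[]] hMA0
    (by rw [show ([] : Word).splitOn m = [[]] from rfl]; exact islexmax_singleton.2 rfl)
  obtain ⟨b, MA', rfl⟩ := List.exists_cons_of_ne_nil (islexmax_ne_nil hMA0)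
  obtain ⟨hb, hMA'nil⟩ : Wle b [] ∧ MA' = [] := by
    rcases hle1 with ⟨h1, e1⟩ | ⟨s, hs1, hs2, _, _, hnr⟩
    · exact ⟨(e1 0 (by simp)).1, by simpa using h1⟩
    · have : s = 0 := by simpa using hs2
      subst this
      exact absurd (wle_nil_le _) hnr
  have hSA2 : 2 ≤ (C.splitOn m).length := two_le_splitOn_length hmem
  have hfull : LexLe Wle (C.splitOn m) (b :: MA') := hMA0.2 _ (List.Sublist.refl _)
  subst hMA'nil
  rcases hfull with ⟨h1, _⟩ | ⟨s, hs1, hs2, _, hr, hnr⟩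
  · simp at h1; omega
  · have : s = 0 := by simpa using hs2
    subst this
    exact hnr (wle_trans hb (wle_nil_le _))

lemma splitOn_block_length {A b : Word} {m : ℕ} (hmem : m ∈ A) (hb : b ∈ A.splitOn m) :
    b.length ≤ A.length - 1 := by
  have hsum := splitOn_length_sum A m
  have h2 := two_le_splitOn_length hmem
  have hle : b.length ≤ ((A.splitOn m).map List.length).sum :=
    List.le_sum_of_mem (List.mem_map.2 ⟨_, hb, rfl⟩)
  omega

lemma NFAux_iff : ∀ (f : ℕ) (A : Word), A.length ≤ f →
    (NFAux f A ↔ (A = [] ∨ ∀ m, A.min? = some m →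
      (A.splitOn m).Chain' (fun x y => Wle y x) ∧ ∀ b ∈ A.splitOn m, InNF b)) := by
  intro f
  induction f using Nat.strong_induction_on with
  | _ f ih =>
    intro A hA
    match f with
    | 0 =>
      have : A = [] := List.length_eq_zero_iff.1 (le_antisymm hA (Nat.zero_le _))
      subst this
      simp only [NFAux]
      constructor
      · intro _; exact Or.inl trivial
      · intro _; trivial
    | (g+1) =>
      show (A = [] ∨ _) ↔ _
      apply or_congr Iff.rfl
      apply forall_congr'
      intro m
      apply imp_congr_right
      intro hm
      apply and_congr Iff.rfl
      obtain ⟨hmem, _⟩ := min?_eq_some_iff_nat.1 hm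
      constructor
      · intro h b hb
        have hblen : b.length ≤ A.length - 1 := splitOn_block_length hmem hb
        have h1 : NFAux g b ↔ _ := ih g (by omega) b (by omega)
        have h2 : NFAux b.length b ↔ _ := ih b.length (by
          have : A.length ≥ 1 := List.length_pos_iff.2 (List.ne_nil_of_mem hmem)
          omega) b le_rfl
        exact h2.2 (h1.1 (h b hb))
      · intro h b hb
        have hblen : b.length ≤ A.length - 1 := splitOn_block_length hmem hb
        have h1 : NFAux g b ↔ _ := ih g (by omega) b (by omega)
        have h2 : NFAux b.length b ↔ _ := ih b.length (by
          have : A.length ≥ 1 := List.length_pos_iff.2 (List.ne_nil_of_mem hmem)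
          omega) b le_rfl
        exact h1.2 (h2.1 (h b hb))

lemma innf_iff (A : Word) : InNF A ↔ (A = [] ∨ ∀ m, A.min? = some m →
    (A.splitOn m).Chain' (fun x y => Wle y x) ∧ ∀ b ∈ A.splitOn m, InNF b) :=
  NFAux_iff A.length A le_rfl

lemma innf_nil : InNF [] := by rw [innf_iff]; exact Or.inl rfl

-- intercalate facts
lemma intercalate_cons_cons (m : ℕ) (c d : Word) (M : List Word) :
    [m].intercalate (c :: d :: M) = c ++ m :: [m].intercalate (d :: M) := by
  simp [List.intercalate, List.intersperse_cons_cons]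

lemma intercalate_singleton' (m : ℕ) (c : Word) : [m].intercalate [c] = c := by
  simp [List.intercalate]

lemma mem_intercalate {m : ℕ} {M : List Word} {x : ℕ} (hx : x ∈ [m].intercalate M) :
    x = m ∨ ∃ c ∈ M, x ∈ c := by
  induction M with
  | nil => simp [List.intercalate] at hx
  | cons c M ih =>
    match M with
    | [] =>
      rw [intercalate_singleton'] at hx
      exact Or.inr ⟨c, List.mem_cons_self, hx⟩
    | d :: M' =>
      rw [intercalate_cons_cons] at hx
      rcases List.mem_append.1 hx with h | h
      · exact Or.inr ⟨c, List.mem_cons_self, h⟩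
      · rcases List.mem_cons.1 h with rfl | h
        · exact Or.inl rfl
        · rcases ih h with h' | ⟨e, he, hxe⟩
          · exact Or.inl h'
          · exact Or.inr ⟨e, List.mem_cons_of_mem _ he, hxe⟩

lemma length_intercalate (m : ℕ) (M : List Word) (h : M ≠ []) :
    ([m].intercalate M).length + 1 = (M.map List.length).sum + M.length := by
  induction M with
  | nil => exact absurd rfl h
  | cons c M ih =>
    match M with
    | [] => simp [intercalate_singleton']
    | d :: M' =>
      rw [intercalate_cons_cons]
      have := ih (by simp)
      simp only [List.length_append, List.length_cons, List.map_cons, List.sum_cons] at this ⊢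
      omega

lemma lexle_refl' (xs : List Word) : LexLe Wle xs xs :=
  lexle_of_equiv le_rfl (fun i _ => ⟨wle_refl _, wle_refl _⟩)

lemma islexmax_ne_nil' {xs M : List Word} (hxs : xs ≠ []) (hM : IsLexMax Wle xs M) : M ≠ [] := by
  obtain ⟨c, cs, rfl⟩ := List.exists_cons_of_ne_nil hxs
  rintro rfl
  exact not_lexle_cons_nil _ _ (hM.2 [c] ((List.nil_sublist cs).cons₂ c))

lemma exists_forall₂ {α β : Type*} {P : α → β → Prop} :
    ∀ l : List α, (∀ a ∈ l, ∃ b, P a b) → ∃ l', List.Forall₂ P l l' := by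
  intro l
  induction l with
  | nil => exact fun _ => ⟨[], List.Forall₂.nil⟩
  | cons a t ih =>
    intro h
    obtain ⟨b, hb⟩ := h a (List.mem_cons_self)
    obtain ⟨l', hl'⟩ := ih (fun x hx => h x (List.mem_cons_of_mem _ hx))
    exact ⟨b :: l', List.Forall₂.cons hb hl'⟩

lemma forall₂_mem_right {α β : Type*} {P : α → β → Prop} {l : List α} {l' : List β} {b : β}
    (h : List.Forall₂ P l l') (hb : b ∈ l') : ∃ a ∈ l, P a b := by
  induction h with
  | nil => simp at hb
  | cons hab htl ih =>
    rcases List.mem_cons.1 hb with rfl | hb'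
    · exact ⟨_, List.mem_cons_self, hab⟩
    · obtain ⟨a, ha, hP⟩ := ih hb'
      exact ⟨a, List.mem_cons_of_mem _ ha, hP⟩

lemma forall₂_sublist_right {α β : Type*} {P : α → β → Prop} :
    ∀ {l : List α} {l' : List β} {s' : List β}, List.Forall₂ P l l' → s'.Sublist l' →
      ∃ s, s.Sublist l ∧ List.Forall₂ P s s' := by
  intro l l' s' h hsub
  induction hsub generalizing l with
  | slnil => exact ⟨[], List.nil_sublist _, List.Forall₂.nil⟩
  | @cons s' t b hs ih =>
    obtain ⟨a, l₀, hab, htl, rfl⟩ := List.forall₂_cons_right_iff.1 h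
    obtain ⟨s, hssub, hf⟩ := ih htl
    exact ⟨s, hssub.cons _, hf⟩
  | @cons_cons s' t b hs ih =>
    obtain ⟨a, l₀, hab, htl, rfl⟩ := List.forall₂_cons_right_iff.1 h
    obtain ⟨s, hssub, hf⟩ := ih htl
    exact ⟨a :: s, hssub.cons₂ _, List.Forall₂.cons hab hf⟩

lemma forall₂_sublist_left {α β : Type*} {P : α → β → Prop} :
    ∀ {l : List α} {l' : List β} {s : List α}, List.Forall₂ P l l' → s.Sublist l →
      ∃ s', s'.Sublist l' ∧ List.Forall₂ P s s' := by
  intro l l' s h hsub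
  induction hsub generalizing l' with
  | slnil => exact ⟨[], List.nil_sublist _, List.Forall₂.nil⟩
  | @cons s t a hs ih =>
    obtain ⟨b, l₀, hab, htl, rfl⟩ := List.forall₂_cons_left_iff.1 h
    obtain ⟨s', hssub, hf⟩ := ih htl
    exact ⟨s', hssub.cons _, hf⟩
  | @cons_cons s t a hs ih =>
    obtain ⟨b, l₀, hab, htl, rfl⟩ := List.forall₂_cons_left_iff.1 h
    obtain ⟨s', hssub, hf⟩ := ih htl
    exact ⟨b :: s', hssub.cons₂ _, List.Forall₂.cons hab hf⟩

lemma forall₂_sum_length_le {σ cs : List Word}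
    (h : List.Forall₂ (fun b c => c.length ≤ b.length) σ cs) :
    (cs.map List.length).sum ≤ (σ.map List.length).sum := by
  induction h with
  | nil => simp
  | cons hab htl ih => simp only [List.map_cons, List.sum_cons]; omega

lemma forall₂_equiv_getD {xs ys : List Word} (h : List.Forall₂ Wequiv xs ys) (i : ℕ) :
    Wequiv (xs.getD i []) (ys.getD i []) := by
  obtain ⟨hlen, hget⟩ := List.forall₂_iff_get.1 h
  rcases lt_or_ge i xs.length with hi | hi
  · rw [List.getD_eq_getElem _ _ hi, List.getD_eq_getElem _ _ (by omega)]
    exact hget i hi (by omega)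
  · rw [List.getD_eq_default _ _ hi, List.getD_eq_default _ _ (by omega)]
    exact ⟨wle_nil_nil, wle_nil_nil⟩

lemma lexle_congr_equiv {xs xs' ys ys' : List Word}
    (h1 : List.Forall₂ Wequiv xs xs') (h2 : List.Forall₂ Wequiv ys ys')
    (h : LexLe Wle xs ys) : LexLe Wle xs' ys' := by
  have l1 := h1.length_eq
  have l2 := h2.length_eq
  have e1 := forall₂_equiv_getD h1
  have e2 := forall₂_equiv_getD h2
  rcases h with ⟨hlen, he⟩ | ⟨s, hs1, hs2, hb, hr, hnr⟩
  · refine Or.inl ⟨by omega, fun i hi => ?_⟩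
    have hi' : i < xs.length := by omega
    exact ⟨wle_trans (e1 i).2 (wle_trans (he i hi').1 (e2 i).1),
      wle_trans (e2 i).2 (wle_trans (he i hi').2 (e1 i).1)⟩
  · refine Or.inr ⟨s, by omega, by omega, fun i hi => ?_,
      wle_trans (e1 s).2 (wle_trans hr (e2 s).1), fun hc => hnr ?_⟩
    · exact ⟨wle_trans (e1 i).2 (wle_trans (hb i hi).1 (e2 i).1),
        wle_trans (e2 i).2 (wle_trans (hb i hi).2 (e1 i).1)⟩
    · exact wle_trans (e2 s).1 (wle_trans hc (e1 s).2)

theorem nf_exists_aux : ∀ n (A : Word), A.length ≤ n →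
    ∃ B, InNF B ∧ Wequiv A B ∧ B.length ≤ A.length ∧ (∀ x ∈ B, x ∈ A) := by
  intro n
  induction n using Nat.strong_induction_on with
  | _ n ih =>
    intro A hA
    rcases eq_or_ne A [] with rfl | hne
    · exact ⟨[], innf_nil, ⟨wle_nil_nil, wle_nil_nil⟩, le_rfl, by simp⟩
    obtain ⟨m, hmin⟩ := min?_exists_of_ne_nil hne
    obtain ⟨hmem, hmle⟩ := min?_eq_some_iff_nat.1 hmin
    have hA1 : 1 ≤ A.length := List.length_pos_iff.2 hne
    set σ := A.splitOn m with hσ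
    have hblock : ∀ b ∈ σ, ∃ c, InNF c ∧ Wequiv b c ∧ c.length ≤ b.length ∧ (∀ x ∈ c, x ∈ b) :=
      fun b hb => ih (A.length - 1) (by omega) b (splitOn_block_length hmem hb)
    obtain ⟨cs, hcs⟩ := exists_forall₂ σ hblock
    have hcsne : cs ≠ [] := by
      intro h
      apply splitOn_ne_nil A m
      have := hcs.length_eq
      rw [h] at this
      simp only [List.length_nil] at this
      exact List.length_eq_zero_iff.1 this
    obtain ⟨M, hM⟩ := exists_islexmax' cs
    have hMne : M ≠ [] := islexmax_ne_nil' hcsne hM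
    have hchain : M.Chain' (fun x y => Wle y x) := islexmax_chain' hM
    -- facts about entries of cs and M
    have hcs_entry : ∀ c ∈ cs, InNF c ∧ (∀ x ∈ c, x ∈ A ∧ x ≠ m) := by
      intro c hc
      obtain ⟨b, hb, hP⟩ := forall₂_mem_right hcs hc
      exact ⟨hP.1, fun x hx => mem_of_mem_splitOn hb (hP.2.2.2 x hx)⟩
    have hM_entry : ∀ c ∈ M, InNF c ∧ (∀ x ∈ c, x ∈ A ∧ x ≠ m) :=
      fun c hc => hcs_entry c (hM.1.subset hc)
    set B := [m].intercalate M with hB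
    have hsplitB : B.splitOn m = M :=
      List.splitOn_intercalate (ls := M) m (fun c hc hx => (hM_entry c hc).2 m hx |>.2 rfl) hMne
    have hBsym : ∀ x ∈ B, x ∈ A := by
      intro x hx
      rcases mem_intercalate hx with rfl | ⟨c, hc, hxc⟩
      · exact hmem
      · exact ((hM_entry c hc).2 x hxc).1
    have hBle : ∀ x ∈ B, m ≤ x := fun x hx => hmle x (hBsym x hx)
    -- InNF B
    have hBnf : InNF B := by
      match M, hMne with
      | [c], _ =>
        have : B = c := by rw [hB, intercalate_singleton']
        rw [this]
        exact (hM_entry c (List.mem_cons_self)).1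
      | c :: d :: M', _ =>
        have hmB : m ∈ B := by
          rw [hB, intercalate_cons_cons]
          exact List.mem_append_right _ (List.mem_cons_self)
        have hminB : B.min? = some m := min?_eq_some_iff_nat.2 ⟨hmB, hBle⟩
        rw [innf_iff]
        refine Or.inr (fun m' hm' => ?_)
        rw [hminB] at hm'
        have hmm' : m' = m := (Option.some_inj.1 hm').symm
        subst hmm'
        rw [hsplitB]
        exact ⟨hchain, fun b hb => (hM_entry b hb).1⟩
    -- equivalences between σ, cs and pullback of M
    have hcs_equiv : List.Forall₂ Wequiv σ cs := hcs.imp (fun _ _ h => h.2.1)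
    obtain ⟨M₀, hM₀sub, hM₀f⟩ := forall₂_sublist_right hcs_equiv hM.1
    have hM₀M : List.Forall₂ Wequiv M₀ M := hM₀f
    have hsymm : ∀ {l l' : List Word}, List.Forall₂ Wequiv l l' → List.Forall₂ Wequiv l' l := by
      intro l l' h
      induction h with
      | nil => exact List.Forall₂.nil
      | cons hab htl ihs => exact List.Forall₂.cons ⟨hab.2, hab.1⟩ ihs
    have hM₀max : IsLexMax Wle σ M₀ := by
      refine ⟨hM₀sub, fun N hN => ?_⟩
      obtain ⟨N', hN'sub, hNf⟩ := forall₂_sublist_left hcs_equiv hN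
      exact lexle_congr_equiv (hsymm hNf) (hsymm hM₀M) (hM.2 N' hN'sub)
    have hMMax : IsLexMax Wle M M := islexmax_self_of_chain hchain
    have hrefl₂ : ∀ l : List Word, List.Forall₂ Wequiv l l := by
      intro l
      induction l with
      | nil => exact List.Forall₂.nil
      | cons a t iht => exact List.Forall₂.cons ⟨wle_refl a, wle_refl a⟩ iht
    have hM₀M_le : LexLe Wle M₀ M := lexle_congr_equiv (hrefl₂ M₀) hM₀M (lexle_refl' M₀)
    have hMM₀_le : LexLe Wle M M₀ := lexle_congr_equiv (hrefl₂ M) (hsymm hM₀M) (lexle_refl' M)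
    -- Wequiv A B
    have hmleAB : ∀ a ∈ A ++ B, m ≤ a := by
      intro a ha
      rcases List.mem_append.1 ha with h | h
      · exact hmle a h
      · exact hBle a h
    have hmleBA : ∀ a ∈ B ++ A, m ≤ a := by
      intro a ha
      rcases List.mem_append.1 ha with h | h
      · exact hBle a h
      · exact hmle a h
    have hAB : Wle A B := by
      rw [wle_iff_cmp (m := m) hmleAB]
      intro MA MB hMA hMB
      rw [hsplitB] at hMB
      exact lexle_trans' (lexle_trans' (hM₀max.2 MA hMA.1) hM₀M_le) (hMB.2 M (List.Sublist.refl _))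
    have hBA : Wle B A := by
      rw [wle_iff_cmp (m := m) hmleBA]
      intro MB MA hMB hMA
      rw [hsplitB] at hMB
      exact lexle_trans' (lexle_trans' (hMMax.2 MB hMB.1) hMM₀_le) (hMA.2 M₀ hM₀sub)
    -- length
    have hlen : B.length ≤ A.length := by
      have h1 := length_intercalate m M hMne
      rw [← hB] at h1
      have h2 := splitOn_length_sum A m
      rw [← hσ] at h2
      have h3 : (M.map List.length).sum ≤ (cs.map List.length).sum :=
        List.Sublist.sum_le_sum (hM.1.map List.length) (fun a _ => Nat.zero_le a)
      have h4 : (cs.map List.length).sum ≤ (σ.map List.length).sum :=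
        forall₂_sum_length_le (hcs.imp (fun _ _ h => h.2.2.1))
      have h5 : M.length ≤ cs.length := hM.1.length_le
      have h6 : cs.length = σ.length := hcs.length_eq.symm
      omega
    exact ⟨B, hBnf, ⟨hAB, hBA⟩, hlen, hBsym⟩

theorem nf_exists (A : Word) :
    ∃ B, InNF B ∧ Wequiv A B ∧ B.length ≤ A.length ∧ (∀ x ∈ B, x ∈ A) :=
  nf_exists_aux A.length A le_rfl

theorem nf_unique_aux : ∀ n (B B' : Word), B.length + B'.length ≤ n → InNF B → InNF B' →
    Wequiv B B' → B = B' := by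
  intro n
  induction n using Nat.strong_induction_on with
  | _ n ih =>
    intro B B' hlen hB hB' heq
    rcases eq_or_ne B [] with rfl | hBne
    · rcases eq_or_ne B' [] with rfl | hB'ne
      · rfl
      · exact absurd heq.2 (wle_not_le_nil hB'ne)
    rcases eq_or_ne B' [] with rfl | hB'ne
    · exact absurd heq.1 (wle_not_le_nil hBne)
    have hne : B ++ B' ≠ [] := fun h => hBne (List.append_eq_nil_iff.1 h).1
    obtain ⟨m, hmin⟩ := min?_exists_of_ne_nil hne
    obtain ⟨hmem, hle⟩ := min?_eq_some_iff_nat.1 hmin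
    have hleB : ∀ a ∈ B, m ≤ a := fun a ha => hle a (List.mem_append_left _ ha)
    have hleB' : ∀ a ∈ B', m ≤ a := fun a ha => hle a (List.mem_append_right _ ha)
    have hc1 : Cmp m B B' := (wle_iff_cmp (m := m) hle).1 heq.1
    have hc2 : Cmp m B' B := (wle_iff_cmp (m := m) (by
      intro a ha
      rcases List.mem_append.1 ha with h | h
      · exact hleB' a h
      · exact hleB a h)).1 heq.2
    -- chains / NF blocks via InNF, provided the word contains m
    have hNFsplit : ∀ C : Word, C ≠ [] → InNF C → (∀ a ∈ C, m ≤ a) → m ∈ C →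
        (C.splitOn m).Chain' (fun x y => Wle y x) ∧ ∀ b ∈ C.splitOn m, InNF b := by
      intro C hCne hC hCle hCm
      have hminC : C.min? = some m := min?_eq_some_iff_nat.2 ⟨hCm, hCle⟩
      rcases (innf_iff C).1 hC with rfl | h
      · exact absurd rfl hCne
      · exact h m hminC
    -- m belongs to both words
    have hmB : m ∈ B := by
      by_contra hmB
      have hmB' : m ∈ B' := by
        rcases List.mem_append.1 hmem with h | h
        · exact absurd h hmB
        · exact h
      obtain ⟨hch', _⟩ := hNFsplit B' hB'ne hB' hleB' hmB'
      have hsplB : B.splitOn m = [B] := splitOn_of_not_mem hmB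
      have hmax' : IsLexMax Wle (B'.splitOn m) (B'.splitOn m) := islexmax_self_of_chain hch'
      have hmaxB : IsLexMax Wle (B.splitOn m) [B] := by
        rw [hsplB]; exact islexmax_singleton.2 rfl
      have h1 := hc1 [B] (B'.splitOn m) hmaxB hmax'
      have h2 := hc2 (B'.splitOn m) [B] hmax' hmaxB
      have := (lexle_both h2 h1).1
      have h2' := two_le_splitOn_length hmB'
      simp at this
      omega
    have hmB' : m ∈ B' := by
      by_contra hmB'
      obtain ⟨hch, _⟩ := hNFsplit B hBne hB hleB hmB
      have hsplB' : B'.splitOn m = [B'] := splitOn_of_not_mem hmB'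
      have hmax : IsLexMax Wle (B.splitOn m) (B.splitOn m) := islexmax_self_of_chain hch
      have hmaxB' : IsLexMax Wle (B'.splitOn m) [B'] := by
        rw [hsplB']; exact islexmax_singleton.2 rfl
      have h1 := hc1 (B.splitOn m) [B'] hmax hmaxB'
      have h2 := hc2 [B'] (B.splitOn m) hmaxB' hmax
      have := (lexle_both h1 h2).1
      have h2' := two_le_splitOn_length hmB
      simp at this
      omega
    obtain ⟨hch, hnf⟩ := hNFsplit B hBne hB hleB hmB
    obtain ⟨hch', hnf'⟩ := hNFsplit B' hB'ne hB' hleB' hmB'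
    have hmax : IsLexMax Wle (B.splitOn m) (B.splitOn m) := islexmax_self_of_chain hch
    have hmax' : IsLexMax Wle (B'.splitOn m) (B'.splitOn m) := islexmax_self_of_chain hch'
    have h1 := hc1 (B.splitOn m) (B'.splitOn m) hmax hmax'
    have h2 := hc2 (B'.splitOn m) (B.splitOn m) hmax' hmax
    obtain ⟨hlen2, he⟩ := lexle_both h1 h2
    -- entrywise equality by induction
    have hspleq : B.splitOn m = B'.splitOn m := by
      apply List.ext_getElem hlen2
      intro i hi hi'
      have hei := he i hi
      rw [List.getD_eq_getElem _ _ hi, List.getD_eq_getElem _ _ hi'] at hei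
      have hbmem : (B.splitOn m)[i] ∈ B.splitOn m := List.getElem_mem hi
      have hbmem' : (B'.splitOn m)[i] ∈ B'.splitOn m := List.getElem_mem hi'
      have hlb := splitOn_block_length hmB hbmem
      have hlb' := splitOn_block_length hmB' hbmem'
      have hBpos : 1 ≤ B.length := List.length_pos_iff.2 hBne
      have hB'pos : 1 ≤ B'.length := List.length_pos_iff.2 hB'ne
      exact ih ((B.splitOn m)[i].length + (B'.splitOn m)[i].length) (by omega) _ _ le_rfl
        (hnf _ hbmem) (hnf' _ hbmem') hei
    calc B = [m].intercalate (B.splitOn m) := (List.intercalate_splitOn (xs := B) m).symm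
      _ = [m].intercalate (B'.splitOn m) := by rw [hspleq]
      _ = B' := List.intercalate_splitOn (xs := B') m

theorem nf_unique {B B' : Word} (hB : InNF B) (hB' : InNF B') (h : Wequiv B B') : B = B' :=
  nf_unique_aux (B.length + B'.length) B B' le_rfl hB hB' h


theorem exists_unique_normal_form (A : Word) :
    (∃! B : Word, InNF B ∧ Wequiv A B) ∧
    ∀ B : Word, InNF B → Wequiv A B → B.length ≤ A.length := by
  obtain ⟨B₀, hnf, heq, hlen, -⟩ := nf_exists A
  constructor
  · refine ⟨B₀, ⟨hnf, heq⟩, ?_⟩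
    rintro B ⟨hBnf, hBeq⟩
    exact nf_unique hBnf hnf ⟨wle_trans hBeq.2 heq.1, wle_trans heq.2 hBeq.1⟩
  · intro B hBnf hBeq
    have hBB₀ : B = B₀ := nf_unique hBnf hnf ⟨wle_trans hBeq.2 heq.1, wle_trans heq.2 hBeq.1⟩
    rw [hBB₀]
    exact hlen
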